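/- Let X be a Hausdorff topological vector space over ℝ, L : X → ℝ a continuous linear functional, P ⊆ X a subset such that P ∩ {x : L(x) ≤ c} is compact for every c ∈ ℝ, and B ⊆ X a closed linear subspace with L(b) = 0 for all b ∈ B. Then P + B is closed in X. -/

import Mathlib

open Pointwise

/-- Abstract Lemma 3.5: if the sublevel sets of a continuous linear functional `L`
inside `P` are compact and `B` is a closed subspace on which `L` vanishes,
then `P + B` is closed. -/
theorem stmt_10 (X : Type*) [AddCommGroup X] [Module ℝ X] [TopologicalSpace X]
    [IsTopologicalAddGroup X] [ContinuousSMul ℝ X] [T2Space X]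
    (L : X →L[ℝ] ℝ) (P : Set X)
    (hP : ∀ c : ℝ, IsCompact (P ∩ {x : X | L x ≤ c}))
    (B : Submodule ℝ X) (hBclosed : IsClosed (B : Set X))
    (hLB : ∀ b ∈ B, L b = 0) :
    IsClosed (P + (B : Set X)) := by
  rw [← isOpen_compl_iff, isOpen_iff_mem_nhds]
  intro z hz
  set c : ℝ := L z + 1 with hc
  set K : Set X := P ∩ {x : X | L x ≤ c} with hK
  have hKB : IsClosed (K + (B : Set X)) :=
    hBclosed.add_left_of_isCompact (hP c)
  have hzKB : z ∉ K + (B : Set X) := by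
    intro hmem
    exact hz (Set.add_subset_add_right Set.inter_subset_left hmem)
  -- neighborhood: (K+B)ᶜ ∩ {x | L x < c}
  have hU : (K + (B : Set X))ᶜ ∩ {x : X | L x < c} ∈ nhds z := by
    refine Filter.inter_mem (hKB.isOpen_compl.mem_nhds hzKB) ?_
    have : IsOpen {x : X | L x < c} := isOpen_lt L.continuous continuous_const
    exact this.mem_nhds (by simp [hc])
  refine Filter.mem_of_superset hU ?_
  rintro x ⟨hx1, hx2⟩ ⟨p, hp, b, hb, rfl⟩
  apply hx1
  refine ⟨p, ⟨hp, ?_⟩, b, hb, rfl⟩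
  have : L (p + b) = L p := by simp [map_add, hLB b hb]
  simp only [Set.mem_setOf_eq]
  rw [← this]
  exact le_of_lt hx2
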